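/- Let U, V, W > 0 with V > 1 and W > 1, and suppose W + W⁻¹ < 2UV < (W − W⁻¹) + 2V²W⁻¹. Then −4U² + 4UV(W + W⁻¹) − (W + W⁻¹)² > 0. Equivalently, the factorization −V⁻²(2UV − V(V − √(V²−1))(W+W⁻¹))(2UV − V(V + √(V²−1))(W+W⁻¹)) is positive. -/

import Mathlib

theorem stmt18 (U V W : ℝ) (hU : 0 < U) (hV : 1 < V) (hW : 1 < W)
    (h1 : W + W⁻¹ < 2 * U * V)
    (h2 : 2 * U * V < (W - W⁻¹) + 2 * V ^ 2 * W⁻¹) :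
    0 < -4 * U ^ 2 + 4 * U * V * (W + W⁻¹) - (W + W⁻¹) ^ 2 ∧
    0 < -(V ^ 2)⁻¹ * (2 * U * V - V * (V - Real.sqrt (V ^ 2 - 1)) * (W + W⁻¹))
        * (2 * U * V - V * (V + Real.sqrt (V ^ 2 - 1)) * (W + W⁻¹)) := by
  have hW0 : (0:ℝ) < W := lt_trans one_pos hW
  have hx : W * W⁻¹ = 1 := mul_inv_cancel₀ (ne_of_gt hW0)
  have hV0 : (0:ℝ) < V := lt_trans one_pos hV
  have hV21 : (0:ℝ) < V ^ 2 - 1 := by nlinarith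
  have hxpos : (0:ℝ) < W⁻¹ := inv_pos.mpr hW0
  have hfirst : 0 < -4 * U ^ 2 + 4 * U * V * (W + W⁻¹) - (W + W⁻¹) ^ 2 := by
    nlinarith [mul_pos (sub_pos.mpr h1) (sub_pos.mpr h2),
      mul_pos (mul_pos hW0 (sub_pos.mpr h1)) hV21,
      mul_pos hW0 hxpos, sq_nonneg (W - W⁻¹), mul_pos hU hV0, sq_nonneg V, hx,
      mul_pos (mul_pos hxpos hxpos) hV21]
  refine ⟨hfirst, ?_⟩
  have hr : Real.sqrt (V ^ 2 - 1) ^ 2 = V ^ 2 - 1 :=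
    Real.sq_sqrt (le_of_lt hV21)
  have hVne : V ≠ 0 := ne_of_gt hV0
  have hWne : W ≠ 0 := ne_of_gt hW0
  have key : -(V ^ 2)⁻¹ * (2 * U * V - V * (V - Real.sqrt (V ^ 2 - 1)) * (W + W⁻¹))
        * (2 * U * V - V * (V + Real.sqrt (V ^ 2 - 1)) * (W + W⁻¹))
      = -4 * U ^ 2 + 4 * U * V * (W + W⁻¹) - (W + W⁻¹) ^ 2 := by
    field_simp
    linear_combination (1 + 2 * W ^ 2 + W ^ 4) * hr
  rw [key]
  exact hfirst
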